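/- For every formula φ of modal team logic MTL, φ is satisfiable (there exist a Kripke structure K and a team T in K with (K,T) ⊨ φ) if and only if its standard translation st_x(φ) ∈ FO²(~) is satisfiable (there exist a τ_M-structure ℬ and a team S in ℬ with domain containing {x} such that (ℬ,S) ⊨ st_x(φ)). -/

import Mathlib

set_option autoImplicit false

open Classical

/-! ## First-order vocabularies, structures, terms -/

/-- A first-order vocabulary: function symbols and relation symbols with arities. -/
structure Vocab : Type 1 where
  Func : Type
  fArity : Func → ℕ
  Rel : Type
  rArity : Rel → ℕ

/-- A `τ`-structure (with nonempty domain, as usual in first-order logic). -/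
structure Struc (τ : Vocab) : Type 1 where
  Dom : Type
  nonempty : Nonempty Dom
  funcs : ∀ f : τ.Func, (Fin (τ.fArity f) → Dom) → Dom
  rels : ∀ R : τ.Rel, (Fin (τ.rArity R) → Dom) → Prop

/-- `τ`-terms over the variables `ℕ`. -/
inductive Term (τ : Vocab) : Type where
  | var : ℕ → Term τ
  | app : (f : τ.Func) → (Fin (τ.fArity f) → Term τ) → Term τ

namespace Term

variable {τ : Vocab}

/-- The set of variables occurring in a term. -/
def vars : Term τ → Set ℕ
  | .var x => {x}
  | .app _ ts => ⋃ i, (ts i).vars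

/-- Evaluation of a term under a (total) assignment. -/
def eval (A : Struc τ) (s : ℕ → A.Dom) : Term τ → A.Dom
  | .var x => s x
  | .app f ts => A.funcs f fun i => (ts i).eval A s

/-- Size of a term. -/
def size : Term τ → ℕ
  | .var _ => 1
  | .app _ ts => 1 + ∑ i, (ts i).size

end Term

/-! ## Assignments and teams -/

/-- An assignment in `A` with domain `X`. -/
abbrev Assign {τ : Vocab} (A : Struc τ) (X : Set ℕ) : Type := X → A.Dom

/-- A team in `A` with domain `X`: a set of assignments with domain `X`. -/
abbrev Team {τ : Vocab} (A : Struc τ) (X : Set ℕ) : Type := Set (Assign A X)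

namespace Assign

variable {τ : Vocab} {A : Struc τ}

/-- Extend a partial assignment to a total one (junk values outside the domain). -/
noncomputable def toTotal {X : Set ℕ} (s : Assign A X) : ℕ → A.Dom :=
  fun n => if h : n ∈ X then s ⟨n, h⟩ else Classical.choice A.nonempty

/-- Restriction `s↾Y` of an assignment to a smaller domain. -/
def restrict {X Y : Set ℕ} (h : Y ⊆ X) (s : Assign A X) : Assign A Y :=
  fun y => s ⟨y.1, h y.2⟩

/-- The supplemented assignment `s^x_a`, with domain `X ∪ {x}`, mapping `x` to `a`
and any other `y ∈ X` to `s y`. -/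
def supp {X : Set ℕ} (s : Assign A X) (x : ℕ) (a : A.Dom) : Assign A (X ∪ {x}) :=
  fun y =>
    if h : (y : ℕ) = x then a
    else s ⟨y.1, by
      have hy := y.2
      simp only [Set.mem_union, Set.mem_singleton_iff] at hy
      exact hy.resolve_right h⟩

end Assign

namespace Team

variable {τ : Vocab} {A : Struc τ}

/-- Restriction `T↾Y` of a team to a smaller domain. -/
def restrict {X Y : Set ℕ} (h : Y ⊆ X) (T : Team A X) : Team A Y :=
  Assign.restrict h '' T

/-- The supplemented team `T^x_f` for a (supplementing) function
`f` on assignments. -/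
def supp {X : Set ℕ} (T : Team A X) (x : ℕ) (f : Assign A X → Set A.Dom) :
    Team A (X ∪ {x}) :=
  { t | ∃ s ∈ T, ∃ a ∈ f s, t = Assign.supp s x a }

end Team

/-- `t̄⟨T⟩`: the set of evaluations of the tuple of terms `ts` over a team `T`. -/
noncomputable def tupleEval {τ : Vocab} (A : Struc τ) {X : Set ℕ} {k : ℕ}
    (ts : Fin k → Term τ) (T : Team A X) : Set (Fin k → A.Dom) :=
  (fun s i => (ts i).eval A (Assign.toTotal s)) '' T

/-! ## Classical first-order formulas (with equality) and Tarski semantics -/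

inductive FOFormula (τ : Vocab) : Type where
  | rel : (R : τ.Rel) → (Fin (τ.rArity R) → Term τ) → FOFormula τ
  | eq : Term τ → Term τ → FOFormula τ
  | not : FOFormula τ → FOFormula τ
  | and : FOFormula τ → FOFormula τ → FOFormula τ
  | or : FOFormula τ → FOFormula τ → FOFormula τ
  | ex : ℕ → FOFormula τ → FOFormula τ
  | all : ℕ → FOFormula τ → FOFormula τ

namespace FOFormula

variable {τ : Vocab}

/-- Free variables. -/
def Fr : FOFormula τ → Set ℕ
  | .rel _ ts => ⋃ i, (ts i).vars
  | .eq t u => t.vars ∪ u.vars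
  | .not φ => φ.Fr
  | .and φ ψ => φ.Fr ∪ ψ.Fr
  | .or φ ψ => φ.Fr ∪ ψ.Fr
  | .ex x φ => φ.Fr \ {x}
  | .all x φ => φ.Fr \ {x}

/-- All variables (free and bound). -/
def vars : FOFormula τ → Set ℕ
  | .rel _ ts => ⋃ i, (ts i).vars
  | .eq t u => t.vars ∪ u.vars
  | .not φ => φ.vars
  | .and φ ψ => φ.vars ∪ ψ.vars
  | .or φ ψ => φ.vars ∪ ψ.vars
  | .ex x φ => insert x φ.vars
  | .all x φ => insert x φ.vars

/-- Quantifier rank. -/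
def qr : FOFormula τ → ℕ
  | .rel _ _ => 0
  | .eq _ _ => 0
  | .not φ => φ.qr
  | .and φ ψ => max φ.qr ψ.qr
  | .or φ ψ => max φ.qr ψ.qr
  | .ex _ φ => φ.qr + 1
  | .all _ φ => φ.qr + 1

/-- Size (length in a suitable encoding). -/
def size : FOFormula τ → ℕ
  | .rel _ ts => 1 + ∑ i, (ts i).size
  | .eq t u => 1 + t.size + u.size
  | .not φ => φ.size + 1
  | .and φ ψ => φ.size + ψ.size + 1
  | .or φ ψ => φ.size + ψ.size + 1
  | .ex _ φ => φ.size + 2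
  | .all _ φ => φ.size + 2

/-- Width: the number of distinct variables occurring in the formula. -/
noncomputable def width (φ : FOFormula τ) : ℕ := φ.vars.ncard

/-- Tarski satisfaction over total assignments. -/
def Sat (A : Struc τ) (s : ℕ → A.Dom) : FOFormula τ → Prop
  | .rel R ts => A.rels R fun i => (ts i).eval A s
  | .eq t u => t.eval A s = u.eval A s
  | .not φ => ¬ φ.Sat A s
  | .and φ ψ => φ.Sat A s ∧ ψ.Sat A s
  | .or φ ψ => φ.Sat A s ∨ ψ.Sat A s
  | .ex x φ => ∃ a : A.Dom, φ.Sat A (Function.update s x a)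
  | .all x φ => ∀ a : A.Dom, φ.Sat A (Function.update s x a)

end FOFormula

/-! ## Generalized dependencies -/

/-- The vocabulary with a single `k`-ary predicate. -/
def depVocab (k : ℕ) : Vocab where
  Func := Empty
  fArity := fun e => e.elim
  Rel := Unit
  rArity := fun _ => k

/-- A family of generalized dependencies: each index `i` has an arity `ar i` and a
first-order *sentence* over a single `ar i`-ary predicate. -/
structure DepFamily : Type 1 where
  idx : Type
  ar : idx → ℕ
  form : ∀ i : idx, FOFormula (depVocab (ar i))
  sentence : ∀ i : idx, (form i).Fr = ∅

/-- The `depVocab k`-structure with domain that of `A` interpreting the predicate as `S`. -/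
def depStruc {τ : Vocab} (A : Struc τ) {k : ℕ} (S : Set (Fin k → A.Dom)) :
    Struc (depVocab k) where
  Dom := A.Dom
  nonempty := A.nonempty
  funcs := fun f => f.elim
  rels := fun _ v => v ∈ S

/-- `A ⊨ δ(S)`: the dependency sentence `δ` holds in `(dom A, S)`. -/
def DepSat {τ : Vocab} (A : Struc τ) {k : ℕ} (δ : FOFormula (depVocab k))
    (S : Set (Fin k → A.Dom)) : Prop :=
  ∀ s : ℕ → A.Dom, δ.Sat (depStruc A S) s

/-! ## Team logic FO(~,𝒟) -/

inductive TFormula (τ : Vocab) (D : DepFamily) : Type where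
  | base : FOFormula τ → TFormula τ D
  | atom : (i : D.idx) → (Fin (D.ar i) → Term τ) → TFormula τ D
  | tnot : TFormula τ D → TFormula τ D
  | tand : TFormula τ D → TFormula τ D → TFormula τ D
  | tor : TFormula τ D → TFormula τ D → TFormula τ D
  | tex : ℕ → TFormula τ D → TFormula τ D
  | tall : ℕ → TFormula τ D → TFormula τ D

namespace TFormula

variable {τ : Vocab} {D : DepFamily}

/-- Free variables. -/
def Fr : TFormula τ D → Set ℕ
  | .base α => α.Fr
  | .atom _ ts => ⋃ i, (ts i).vars
  | .tnot φ => φ.Fr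
  | .tand φ ψ => φ.Fr ∪ ψ.Fr
  | .tor φ ψ => φ.Fr ∪ ψ.Fr
  | .tex x φ => φ.Fr \ {x}
  | .tall x φ => φ.Fr \ {x}

/-- All variables (free and bound). -/
def vars : TFormula τ D → Set ℕ
  | .base α => α.vars
  | .atom _ ts => ⋃ i, (ts i).vars
  | .tnot φ => φ.vars
  | .tand φ ψ => φ.vars ∪ ψ.vars
  | .tor φ ψ => φ.vars ∪ ψ.vars
  | .tex x φ => insert x φ.vars
  | .tall x φ => insert x φ.vars

/-- Quantifier rank. -/
def qr : TFormula τ D → ℕ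
  | .base _ => 0
  | .atom _ _ => 0
  | .tnot φ => φ.qr
  | .tand φ ψ => max φ.qr ψ.qr
  | .tor φ ψ => max φ.qr ψ.qr
  | .tex _ φ => φ.qr + 1
  | .tall _ φ => φ.qr + 1

/-- Size (length in a suitable encoding). -/
def size : TFormula τ D → ℕ
  | .base α => α.size
  | .atom _ ts => 1 + ∑ i, (ts i).size
  | .tnot φ => φ.size + 1
  | .tand φ ψ => φ.size + ψ.size + 1
  | .tor φ ψ => φ.size + ψ.size + 1
  | .tex _ φ => φ.size + 2
  | .tall _ φ => φ.size + 2

/-- Width: the number of distinct variables occurring in the formula. -/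
noncomputable def width (φ : TFormula τ D) : ℕ := φ.vars.ncard

end TFormula

/-- Team semantics of FO(~,𝒟). -/
def TSat {τ : Vocab} {D : DepFamily} (A : Struc τ) :
    TFormula τ D → (X : Set ℕ) → Team A X → Prop
  | .base α, _, T => ∀ s ∈ T, α.Sat A (Assign.toTotal s)
  | .atom i ts, _, T => DepSat A (D.form i) (tupleEval A ts T)
  | .tnot φ, X, T => ¬ TSat A φ X T
  | .tand φ ψ, X, T => TSat A φ X T ∧ TSat A ψ X T
  | .tor φ ψ, X, T => ∃ S U : Team A X, S ∪ U = T ∧ TSat A φ X S ∧ TSat A ψ X U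
  | .tex x φ, X, T => ∃ f : Assign A X → Set A.Dom,
      (∀ s ∈ T, (f s).Nonempty) ∧ TSat A φ (X ∪ {x}) (T.supp x f)
  | .tall x φ, X, T => TSat A φ (X ∪ {x}) (T.supp x fun _ => (Set.univ : Set A.Dom))

/-- Equivalence of team-logic formulas: same satisfying pairs `(A, T)`,
over all teams whose domain contains the free variables of both. -/
def TEquiv {τ : Vocab} {D : DepFamily} (φ ψ : TFormula τ D) : Prop :=
  ∀ (A : Struc τ) (X : Set ℕ), φ.Fr ∪ ψ.Fr ⊆ X →
    ∀ T : Team A X, TSat A φ X T ↔ TSat A ψ X T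

/-- The family of no dependencies at all: plain FO(~). -/
def emptyDeps : DepFamily where
  idx := Empty
  ar := fun e => e.elim
  form := fun e => e.elim
  sentence := fun e => e.elim

/-- `Eβ := ~¬β`. -/
def TFormula.E {τ : Vocab} {D : DepFamily} (β : FOFormula τ) : TFormula τ D :=
  .tnot (.base (.not β))

/-- Boolean disjunction `φ ⊻ ψ := ~(~φ ∧ ~ψ)`. -/
def TFormula.bdis {τ : Vocab} {D : DepFamily} (φ ψ : TFormula τ D) : TFormula τ D :=
  .tnot (.tand (.tnot φ) (.tnot ψ))

/-- Iterated splitting disjunction (nonempty list, head plus tail). -/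
def bigOr {τ : Vocab} {D : DepFamily} :
    TFormula τ D → List (TFormula τ D) → TFormula τ D
  | φ, [] => φ
  | φ, ψ :: l => .tor φ (bigOr ψ l)

/-- Iterated conjunction (nonempty list, head plus tail). -/
def bigAnd {τ : Vocab} {D : DepFamily} :
    TFormula τ D → List (TFormula τ D) → TFormula τ D
  | φ, [] => φ
  | φ, ψ :: l => .tand φ (bigAnd ψ l)

/-- Iterated Boolean disjunction (nonempty list, head plus tail). -/
def bigBdis {τ : Vocab} {D : DepFamily} :
    TFormula τ D → List (TFormula τ D) → TFormula τ D
  | φ, [] => φ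
  | φ, ψ :: l => TFormula.bdis φ (bigBdis ψ l)

/-- `⋁_{i=1}^{n+1} χ_i` (splitting disjunction). -/
def finBigOr {τ : Vocab} {D : DepFamily} {n : ℕ}
    (χ : Fin (n + 1) → TFormula τ D) : TFormula τ D :=
  bigOr (χ 0) (List.ofFn fun i : Fin n => χ i.succ)

/-- `⋀_{i=1}^{n+1} χ_i`. -/
def finBigAnd {τ : Vocab} {D : DepFamily} {n : ℕ}
    (χ : Fin (n + 1) → TFormula τ D) : TFormula τ D :=
  bigAnd (χ 0) (List.ofFn fun i : Fin n => χ i.succ)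

/-- The tower function: `expTower 0 m = m`, `expTower (k+1) m = 2 ^ expTower k m`. -/
def expTower : ℕ → ℕ → ℕ
  | 0, m => m
  | k + 1, m => 2 ^ expTower k m

/-! ## The second-order translation η (semantically) -/

/-- The tuple `x̄;y`: `x̄` itself if `y` occurs in `x̄`, and `x̄` extended by `y` otherwise. -/
noncomputable def semico {n : ℕ} (xs : Fin n → ℕ) (y : ℕ) : Σ m : ℕ, Fin m → ℕ :=
  if y ∈ Set.range xs then ⟨n, xs⟩ else ⟨n + 1, Fin.snoc xs y⟩

/-- `etaSem A φ n xs R` expresses `A ⊨ η^{x̄}_φ(R)`, i.e. the classical (second-order)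
semantics of the translation `η^{x̄}_φ` applied to the relation `R`. -/
def etaSem {τ : Vocab} {D : DepFamily} (A : Struc τ) :
    TFormula τ D → (n : ℕ) → (Fin n → ℕ) → Set (Fin n → A.Dom) → Prop
  | .base α, _, xs, R =>
      ∀ s : ℕ → A.Dom, (fun i => s (xs i)) ∈ R → α.Sat A s
  | .atom i ts, _, xs, R =>
      ∃ S : Set (Fin (D.ar i) → A.Dom),
        (∀ v : Fin (D.ar i) → A.Dom,
          v ∈ S ↔ ∃ s : ℕ → A.Dom,
            (fun j => s (xs j)) ∈ R ∧ (fun j => (ts j).eval A s) = v) ∧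
        DepSat A (D.form i) S
  | .tnot φ, n, xs, R => ¬ etaSem A φ n xs R
  | .tand φ ψ, n, xs, R => etaSem A φ n xs R ∧ etaSem A ψ n xs R
  | .tor φ ψ, n, xs, R =>
      ∃ S U : Set (Fin n → A.Dom),
        (∀ v, v ∈ R ↔ v ∈ S ∨ v ∈ U) ∧ etaSem A φ n xs S ∧ etaSem A ψ n xs U
  | .tex y φ, _, xs, R =>
      ∃ S : Set (Fin (semico xs y).1 → A.Dom),
        (∀ s : ℕ → A.Dom,
          (∃ b : A.Dom, (fun i => Function.update s y b (xs i)) ∈ R) ↔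
          (∃ b : A.Dom, (fun j => Function.update s y b ((semico xs y).2 j)) ∈ S)) ∧
        etaSem A φ (semico xs y).1 (semico xs y).2 S
  | .tall y φ, _, xs, R =>
      ∃ S : Set (Fin (semico xs y).1 → A.Dom),
        (∀ s : ℕ → A.Dom,
          (∃ b : A.Dom, (fun i => Function.update s y b (xs i)) ∈ R) ↔
          (∃ b : A.Dom, (fun j => Function.update s y b ((semico xs y).2 j)) ∈ S)) ∧
        etaSem A φ (semico xs y).1 (semico xs y).2 S ∧
        (∀ s : ℕ → A.Dom, (fun i => s (xs i)) ∈ R →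
          ∀ b : A.Dom, (fun j => Function.update s y b ((semico xs y).2 j)) ∈ S)

/-- `zetaSem A N φ n xs R` expresses `A ⊨ ζ^{x̄,p}_φ(R)` where `N = p(‖A‖)`: like
`etaSem`, but all second-order quantifiers are sparse, i.e. range only over relations
of cardinality at most `N`. -/
def zetaSem {τ : Vocab} {D : DepFamily} (A : Struc τ) (N : ℕ) :
    TFormula τ D → (n : ℕ) → (Fin n → ℕ) → Set (Fin n → A.Dom) → Prop
  | .base α, _, xs, R =>
      ∀ s : ℕ → A.Dom, (fun i => s (xs i)) ∈ R → α.Sat A s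
  | .atom i ts, _, xs, R =>
      ∃ S : Set (Fin (D.ar i) → A.Dom), S.Finite ∧ S.ncard ≤ N ∧
        (∀ v : Fin (D.ar i) → A.Dom,
          v ∈ S ↔ ∃ s : ℕ → A.Dom,
            (fun j => s (xs j)) ∈ R ∧ (fun j => (ts j).eval A s) = v) ∧
        DepSat A (D.form i) S
  | .tnot φ, n, xs, R => ¬ zetaSem A N φ n xs R
  | .tand φ ψ, n, xs, R => zetaSem A N φ n xs R ∧ zetaSem A N ψ n xs R
  | .tor φ ψ, n, xs, R =>
      ∃ S U : Set (Fin n → A.Dom), S.Finite ∧ S.ncard ≤ N ∧ U.Finite ∧ U.ncard ≤ N ∧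
        (∀ v, v ∈ R ↔ v ∈ S ∨ v ∈ U) ∧ zetaSem A N φ n xs S ∧ zetaSem A N ψ n xs U
  | .tex y φ, _, xs, R =>
      ∃ S : Set (Fin (semico xs y).1 → A.Dom), S.Finite ∧ S.ncard ≤ N ∧
        (∀ s : ℕ → A.Dom,
          (∃ b : A.Dom, (fun i => Function.update s y b (xs i)) ∈ R) ↔
          (∃ b : A.Dom, (fun j => Function.update s y b ((semico xs y).2 j)) ∈ S)) ∧
        zetaSem A N φ (semico xs y).1 (semico xs y).2 S
  | .tall y φ, _, xs, R =>
      ∃ S : Set (Fin (semico xs y).1 → A.Dom), S.Finite ∧ S.ncard ≤ N ∧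
        (∀ s : ℕ → A.Dom,
          (∃ b : A.Dom, (fun i => Function.update s y b (xs i)) ∈ R) ↔
          (∃ b : A.Dom, (fun j => Function.update s y b ((semico xs y).2 j)) ∈ S)) ∧
        zetaSem A N φ (semico xs y).1 (semico xs y).2 S ∧
        (∀ s : ℕ → A.Dom, (fun i => s (xs i)) ∈ R →
          ∀ b : A.Dom, (fun j => Function.update s y b ((semico xs y).2 j)) ∈ S)

/-- `‖A‖`: the size of a finite structure, i.e. the size of the domain plus the sizes of
the interpretations of all symbols of the vocabulary. -/
noncomputable def strucNorm {τ : Vocab} (A : Struc τ)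
    [Fintype τ.Rel] [Fintype τ.Func] : ℕ :=
  Nat.card A.Dom + (∑ R : τ.Rel, Set.ncard { v | A.rels R v }) +
    ∑ f : τ.Func, Nat.card A.Dom ^ τ.fArity f

/-! ## Modal team logic MTL -/

inductive MLFormula : Type where
  | prop : ℕ → MLFormula
  | neg : MLFormula → MLFormula
  | and : MLFormula → MLFormula → MLFormula
  | or : MLFormula → MLFormula → MLFormula
  | box : MLFormula → MLFormula
  | dia : MLFormula → MLFormula

inductive MTLFormula : Type where
  | base : MLFormula → MTLFormula
  | mnot : MTLFormula → MTLFormula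
  | mand : MTLFormula → MTLFormula → MTLFormula
  | mor : MTLFormula → MTLFormula → MTLFormula
  | mbox : MTLFormula → MTLFormula
  | mdia : MTLFormula → MTLFormula

/-- A Kripke structure (with nonempty set of worlds, as usual). -/
structure Kripke : Type 1 where
  W : Type
  nonempty : Nonempty W
  R : W → W → Prop
  V : ℕ → Set W

/-- Classical Kripke semantics of ML. -/
def MLFormula.Sat (K : Kripke) (w : K.W) : MLFormula → Prop
  | .prop i => w ∈ K.V i
  | .neg φ => ¬ φ.Sat K w
  | .and φ ψ => φ.Sat K w ∧ ψ.Sat K w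
  | .or φ ψ => φ.Sat K w ∨ ψ.Sat K w
  | .box φ => ∀ v, K.R w v → φ.Sat K v
  | .dia φ => ∃ v, K.R w v ∧ φ.Sat K v

/-- The image `RT` of a team. -/
def Kripke.img (K : Kripke) (T : Set K.W) : Set K.W := { v | ∃ w ∈ T, K.R w v }

/-- `S` is a successor team of `T`: `S ⊆ RT` and `T ⊆ R⁻¹S`. -/
def Kripke.SuccTeam (K : Kripke) (T S : Set K.W) : Prop :=
  S ⊆ K.img T ∧ ∀ w ∈ T, ∃ v ∈ S, K.R w v

/-- Team semantics of MTL. -/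
def MTLSat (K : Kripke) : MTLFormula → Set K.W → Prop
  | .base α, T => ∀ w ∈ T, α.Sat K w
  | .mnot φ, T => ¬ MTLSat K φ T
  | .mand φ ψ, T => MTLSat K φ T ∧ MTLSat K ψ T
  | .mor φ ψ, T => ∃ S U, S ∪ U = T ∧ MTLSat K φ S ∧ MTLSat K ψ U
  | .mbox φ, T => MTLSat K φ (K.img T)
  | .mdia φ, T => ∃ S, K.SuccTeam T S ∧ MTLSat K φ S

/-! ## The standard translation from MTL to FO²(~) -/

/-- The vocabulary `τ_M`: one binary predicate `R` (index `none`) and unary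
predicates `P_i` (index `some i`). -/
def tauM : Vocab where
  Func := Empty
  fArity := fun e => e.elim
  Rel := Option ℕ
  rArity := fun R => match R with
    | none => 2
    | some _ => 1

/-- The two first-order variables `x` (for `false`) and `y` (for `true`). -/
def vIdx : Bool → ℕ
  | false => 0
  | true => 1

/-- The atom `R a b`. -/
def rAtom (a b : ℕ) : FOFormula tauM :=
  .rel none fun i => if (i : ℕ) = 0 then Term.var a else Term.var b

/-- The atom `P_i v`. -/
def pAtom (i v : ℕ) : FOFormula tauM :=
  .rel (some i) fun _ => Term.var v

/-- The standard translation of classical modal logic ML into FO². -/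
def STml : Bool → MLFormula → FOFormula tauM
  | v, .prop i => pAtom i (vIdx v)
  | v, .neg α => .not (STml v α)
  | v, .and α β => .and (STml v α) (STml v β)
  | v, .or α β => .or (STml v α) (STml v β)
  | v, .dia α => .ex (vIdx !v) (.and (rAtom (vIdx v) (vIdx !v)) (STml (!v) α))
  | v, .box α => .all (vIdx !v) (.or (.not (rAtom (vIdx v) (vIdx !v))) (STml (!v) α))

/-- The standard translation of MTL into FO²(~);
`st_x` is `ST false` and `st_y` is `ST true`. -/
def stt : Bool → MTLFormula → TFormula tauM emptyDeps
  | v, .base α => .base (STml v α)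
  | v, .mnot φ => .tnot (stt v φ)
  | v, .mand φ ψ => .tand (stt v φ) (stt v ψ)
  | v, .mor φ ψ => .tor (stt v φ) (stt v ψ)
  | v, .mdia φ => .tex (vIdx !v) (.tand (.base (rAtom (vIdx v) (vIdx !v))) (stt (!v) φ))
  | v, .mbox φ => .tall (vIdx !v)
      (.tor (.base (.not (rAtom (vIdx v) (vIdx !v))))
            (.tand (.base (rAtom (vIdx v) (vIdx !v))) (stt (!v) φ)))

/-- The first-order interpretation `𝒜(K)` of a Kripke structure. -/
def AK (K : Kripke) : Struc tauM where
  Dom := K.W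
  nonempty := K.nonempty
  funcs := fun f => f.elim
  rels := fun R => match R with
    | none => fun v => K.R (v ⟨0, Nat.zero_lt_two⟩) (v ⟨1, Nat.one_lt_two⟩)
    | some i => fun v => v ⟨0, Nat.zero_lt_one⟩ ∈ K.V i

/-- `T^x`: the team of first-order assignments `w^x` for `w ∈ T`. -/
def teamX (K : Kripke) (T : Set K.W) : Team (AK K) ({0} : Set ℕ) :=
  { s | ∃ w ∈ T, s = fun _ => w }

/-- The Kripke structure induced by a `tauM`-structure. -/
def KB (B : Struc tauM) : Kripke where
  W := B.Dom
  nonempty := B.nonempty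
  R := fun w u => B.rels none (fun i => if (i : ℕ) = 0 then w else u)
  V := fun i => { w | B.rels (some i) (fun _ => w) }

lemma rAtom_sat (B : Struc tauM) (s : ℕ → B.Dom) (a b : ℕ) :
    (rAtom a b).Sat B s ↔ (KB B).R (s a) (s b) := by
  show B.rels none _ ↔ B.rels none _
  exact iff_of_eq (congrArg _ (funext fun i => by
    show Term.eval B s (if ((i : Fin 2) : ℕ) = 0 then Term.var a else Term.var b) = _
    split <;> simp_all [Term.eval]))

lemma vIdx_ne (v : Bool) : vIdx v ≠ vIdx !v := by cases v <;> simp [vIdx]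

lemma stml_sat (B : Struc tauM) (α : MLFormula) :
    ∀ (v : Bool) (s : ℕ → B.Dom),
      (STml v α).Sat B s ↔ α.Sat (KB B) (s (vIdx v)) := by
  induction α with
  | prop i => intro v s; rfl
  | neg α ih => intro v s; exact not_congr (ih v s)
  | and α β ihα ihβ => intro v s; exact and_congr (ihα v s) (ihβ v s)
  | or α β ihα ihβ => intro v s; exact or_congr (ihα v s) (ihβ v s)
  | box α ih =>
    intro v s
    show (∀ a : B.Dom, ¬ _ ∨ _) ↔ _
    simp only [MLFormula.Sat]
    refine forall_congr' fun a => ?_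
    rw [rAtom_sat, ih (!v), Function.update_self,
      Function.update_of_ne (vIdx_ne v) _ s, or_iff_not_imp_left, not_not]
  | dia α ih =>
    intro v s
    show (∃ a : B.Dom, _ ∧ _) ↔ _
    simp only [MLFormula.Sat]
    refine exists_congr fun a => ?_
    rw [rAtom_sat, ih (!v), Function.update_self,
      Function.update_of_ne (vIdx_ne v) _ s]

/-- Image of a team at a variable. -/
def imAt {B : Struc tauM} {X : Set ℕ} (z : ℕ) (h : z ∈ X) (T : Team B X) : Set B.Dom :=
  (fun s : Assign B X => s ⟨z, h⟩) '' T

lemma toTotal_mem {B : Struc tauM} {X : Set ℕ} (s : Assign B X) {z : ℕ} (h : z ∈ X) :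
    Assign.toTotal s z = s ⟨z, h⟩ := dif_pos h

lemma supp_at_new {B : Struc tauM} {X : Set ℕ} (s : Assign B X) (y : ℕ) (a : B.Dom)
    (p : y ∈ X ∪ {y}) : Assign.supp s y a ⟨y, p⟩ = a := dif_pos rfl

lemma supp_at_old {B : Struc tauM} {X : Set ℕ} (s : Assign B X) (y : ℕ) (a : B.Dom)
    {z : ℕ} (hz : z ∈ X) (hne : z ≠ y) (p : z ∈ X ∪ {y}) :
    Assign.supp s y a ⟨z, p⟩ = s ⟨z, hz⟩ := by
  simp only [Assign.supp, dif_neg hne]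

lemma rAtom_team {B : Struc tauM} {X : Set ℕ} {x y : ℕ} (hx : x ∈ X) (hy : y ∈ X)
    (t : Assign B X) :
    (rAtom x y).Sat B (Assign.toTotal t) ↔ (KB B).R (t ⟨x, hx⟩) (t ⟨y, hy⟩) := by
  rw [rAtom_sat, toTotal_mem t hx, toTotal_mem t hy]

lemma imAt_sep {B : Struc tauM} {X : Set ℕ} (z : ℕ) (h : z ∈ X) (T : Team B X)
    (S' : Set B.Dom) (hsub : S' ⊆ imAt z h T) :
    imAt z h {s ∈ T | s ⟨z, h⟩ ∈ S'} = S' := by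
  ext a
  constructor
  · rintro ⟨s, ⟨hs, hs'⟩, rfl⟩; exact hs'
  · intro ha
    rcases hsub ha with ⟨s, hs, rfl⟩
    exact ⟨s, ⟨hs, ha⟩, rfl⟩

lemma main_lemma (φ : MTLFormula) :
    ∀ (v : Bool) (B : Struc tauM) (X : Set ℕ) (h : vIdx v ∈ X) (T : Team B X),
      TSat B (stt v φ) X T ↔ MTLSat (KB B) φ (imAt (vIdx v) h T) := by
  induction φ with
  | base α =>
    intro v B X h T
    simp only [stt, TSat, MTLSat, imAt, Set.forall_mem_image]
    constructor
    · rintro H _ ⟨s, hs, rfl⟩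
      have := (stml_sat B α v _).mp (H s hs)
      rwa [toTotal_mem s h] at this
    · intro H s hs
      rw [stml_sat, toTotal_mem s h]
      exact H _ ⟨s, hs, rfl⟩
  | mnot φ ih =>
    intro v B X h T
    exact not_congr (ih v B X h T)
  | mand φ ψ ihφ ihψ =>
    intro v B X h T
    exact and_congr (ihφ v B X h T) (ihψ v B X h T)
  | mor φ ψ ihφ ihψ =>
    intro v B X h T
    simp only [stt, TSat, MTLSat]
    constructor
    · rintro ⟨S, U, rfl, hS, hU⟩
      exact ⟨imAt _ h S, imAt _ h U, (Set.image_union _ _ _).symm,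
        (ihφ v B X h S).mp hS, (ihψ v B X h U).mp hU⟩
    · rintro ⟨S', U', hsplit, hS', hU'⟩
      have hSsub : S' ⊆ imAt (vIdx v) h T := hsplit ▸ Set.subset_union_left
      have hUsub : U' ⊆ imAt (vIdx v) h T := hsplit ▸ Set.subset_union_right
      refine ⟨{s ∈ T | s ⟨vIdx v, h⟩ ∈ S'}, {s ∈ T | s ⟨vIdx v, h⟩ ∈ U'}, ?_, ?_, ?_⟩
      · ext s
        constructor
        · rintro (⟨hs, _⟩ | ⟨hs, _⟩) <;> exact hs
        · intro hs
          have : s ⟨vIdx v, h⟩ ∈ S' ∪ U' := hsplit ▸ ⟨s, hs, rfl⟩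
          rcases this with h' | h'
          · exact Or.inl ⟨hs, h'⟩
          · exact Or.inr ⟨hs, h'⟩
      · rw [ihφ v B X h]; exact Eq.mpr (congrArg (MTLSat (KB B) φ) (imAt_sep _ h T S' hSsub)) hS'
      · rw [ihψ v B X h]; exact Eq.mpr (congrArg (MTLSat (KB B) ψ) (imAt_sep _ h T U' hUsub)) hU'
  | mdia φ ih =>
    intro v B X h T
    have hxy : vIdx v ≠ vIdx !v := vIdx_ne v
    have hx' : vIdx v ∈ X ∪ {vIdx !v} := Set.mem_union_left _ h
    have hy' : vIdx (!v) ∈ X ∪ {vIdx !v} := Set.mem_union_right _ rfl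
    simp only [stt, TSat, MTLSat]
    constructor
    · rintro ⟨f, hne, hatom, hφ⟩
      have fact1 : ∀ s ∈ T, ∀ b ∈ f s, (KB B).R (s ⟨vIdx v, h⟩) b := by
        intro s hs b hb
        have ht : Assign.supp s (vIdx !v) b ∈ T.supp (vIdx !v) f := ⟨s, hs, b, hb, rfl⟩
        have := (rAtom_team hx' hy' _).mp (hatom _ ht)
        rwa [supp_at_old s _ b h hxy, supp_at_new] at this
      refine ⟨imAt (vIdx !v) hy' (T.supp (vIdx !v) f), ⟨?_, ?_⟩,
        (ih (!v) B _ hy' _).mp hφ⟩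
      · rintro a ⟨t, ⟨s, hs, b, hb, rfl⟩, rfl⟩
        simp only [supp_at_new]
        exact ⟨s ⟨vIdx v, h⟩, ⟨s, hs, rfl⟩, fact1 s hs b hb⟩
      · rintro w ⟨s, hs, rfl⟩
        obtain ⟨b, hb⟩ := hne s hs
        exact ⟨b, ⟨Assign.supp s (vIdx !v) b, ⟨s, hs, b, hb, rfl⟩, supp_at_new s _ b hy'⟩,
          fact1 s hs b hb⟩
    · rintro ⟨S, ⟨hS1, hS2⟩, hSφ⟩
      refine ⟨fun s => {b | b ∈ S ∧ (KB B).R (Assign.toTotal s (vIdx v)) b}, ?_, ?_, ?_⟩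
      · intro s hs
        obtain ⟨b, hbS, hR⟩ := hS2 (s ⟨vIdx v, h⟩) ⟨s, hs, rfl⟩
        exact ⟨b, hbS, by rwa [toTotal_mem s h]⟩
      · rintro t ⟨s, hs, b, ⟨hbS, hR⟩, rfl⟩
        rw [rAtom_team hx' hy', supp_at_old s _ b h hxy, supp_at_new]
        rwa [toTotal_mem s h] at hR
      · rw [ih (!v) B _ hy']
        have heq : imAt (vIdx !v) hy'
            (T.supp (vIdx !v) (fun s => {b | b ∈ S ∧ (KB B).R (Assign.toTotal s (vIdx v)) b}))
            = S := by
          ext a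
          constructor
          · rintro ⟨t, ⟨s, hs, b, ⟨hbS, _⟩, rfl⟩, rfl⟩
            exact Eq.mpr (congrArg (· ∈ S) (supp_at_new s _ b hy')) hbS
          · intro ha
            obtain ⟨w, ⟨s, hs, rfl⟩, hR⟩ := hS1 ha
            refine ⟨Assign.supp s (vIdx !v) a, ⟨s, hs, a, ⟨ha, ?_⟩, rfl⟩, supp_at_new s _ a hy'⟩
            rwa [toTotal_mem s h]
        rw [heq]; exact hSφ
  | mbox φ ih =>
    intro v B X h T
    have hxy : vIdx v ≠ vIdx !v := vIdx_ne v
    have hx' : vIdx v ∈ X ∪ {vIdx !v} := Set.mem_union_left _ h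
    have hy' : vIdx (!v) ∈ X ∪ {vIdx !v} := Set.mem_union_right _ rfl
    simp only [stt, TSat, MTLSat]
    -- key set identity
    have key : ∀ U : Team B (X ∪ {vIdx !v}),
        U ⊆ T.supp (vIdx !v) (fun _ => Set.univ) →
        (∀ t ∈ U, (KB B).R (t ⟨vIdx v, hx'⟩) (t ⟨vIdx !v, hy'⟩)) →
        (∀ t ∈ T.supp (vIdx !v) (fun _ => Set.univ),
          (KB B).R (t ⟨vIdx v, hx'⟩) (t ⟨vIdx !v, hy'⟩) → t ∈ U) →
        imAt (vIdx !v) hy' U = (KB B).img (imAt (vIdx v) h T) := by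
      intro U hU1 hU2 hU3
      ext a
      constructor
      · rintro ⟨t, htU, rfl⟩
        obtain ⟨s, hs, b, -, rfl⟩ := hU1 htU
        have := hU2 _ htU
        rw [supp_at_old s _ b h hxy] at this
        exact ⟨s ⟨vIdx v, h⟩, ⟨s, hs, rfl⟩, this⟩
      · rintro ⟨w, ⟨s, hs, rfl⟩, hR⟩
        have htT' : Assign.supp s (vIdx !v) a ∈ T.supp (vIdx !v) (fun _ => Set.univ) :=
          ⟨s, hs, a, Set.mem_univ a, rfl⟩
        have hRt : (KB B).R (Assign.supp s (vIdx !v) a ⟨vIdx v, hx'⟩)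
            (Assign.supp s (vIdx !v) a ⟨vIdx !v, hy'⟩) := by
          rw [supp_at_old s _ a h hxy, supp_at_new]; exact hR
        exact ⟨_, hU3 _ htT' hRt, supp_at_new s _ a hy'⟩
    constructor
    · rintro ⟨S, U, hSU, hS, hUatom, hUφ⟩
      have hU1 : U ⊆ T.supp (vIdx !v) (fun _ => Set.univ) := hSU ▸ Set.subset_union_right
      have hU2 : ∀ t ∈ U, (KB B).R (t ⟨vIdx v, hx'⟩) (t ⟨vIdx !v, hy'⟩) := fun t ht =>
        (rAtom_team hx' hy' t).mp (hUatom t ht)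
      have hU3 : ∀ t ∈ T.supp (vIdx !v) (fun _ => Set.univ),
          (KB B).R (t ⟨vIdx v, hx'⟩) (t ⟨vIdx !v, hy'⟩) → t ∈ U := by
        intro t ht hRt
        have : t ∈ S ∪ U := hSU.symm ▸ ht
        rcases this with htS | htU
        · exact absurd ((rAtom_team hx' hy' t).mpr hRt) (hS t htS)
        · exact htU
      rw [← key U hU1 hU2 hU3]
      exact (ih (!v) B _ hy' U).mp hUφ
    · intro hφ
      set T' := T.supp (vIdx !v) (fun _ => (Set.univ : Set B.Dom)) with hT'
      refine ⟨{t ∈ T' | ¬ (KB B).R (t ⟨vIdx v, hx'⟩) (t ⟨vIdx !v, hy'⟩)},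
        {t ∈ T' | (KB B).R (t ⟨vIdx v, hx'⟩) (t ⟨vIdx !v, hy'⟩)}, ?_, ?_, ?_, ?_⟩
      · ext t
        constructor
        · rintro (⟨ht, -⟩ | ⟨ht, -⟩) <;> exact ht
        · intro ht
          by_cases hR : (KB B).R (t ⟨vIdx v, hx'⟩) (t ⟨vIdx !v, hy'⟩)
          · exact Or.inr ⟨ht, hR⟩
          · exact Or.inl ⟨ht, hR⟩
      · rintro t ⟨-, hnR⟩
        show ¬ (rAtom _ _).Sat B _
        rw [rAtom_team hx' hy']
        exact hnR
      · rintro t ⟨-, hR⟩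
        rw [rAtom_team hx' hy']
        exact hR
      · rw [ih (!v) B _ hy',
          key _ (Set.sep_subset _ _) (fun t ht => ht.2) (fun t ht hRt => ⟨ht, hRt⟩)]
        exact hφ

/-- `φ ∈ MTL` is satisfiable iff its standard translation
`st_x(φ) ∈ FO²(~)` is satisfiable in a team whose domain contains `{x}`
(here `x` is the variable `0`). -/
theorem statement18 (φ : MTLFormula) :
    (∃ (K : Kripke) (T : Set K.W), MTLSat K φ T) ↔
    (∃ (B : Struc tauM) (X : Set ℕ) (T : Team B X),
      ({0} : Set ℕ) ⊆ X ∧ TSat B (stt false φ) X T) := by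
  constructor
  · rintro ⟨K, T, hT⟩
    have h0 : vIdx false ∈ ({0} : Set ℕ) := rfl
    refine ⟨AK K, {0}, teamX K T, subset_rfl, ?_⟩
    rw [main_lemma φ false (AK K) {0} h0 (teamX K T)]
    have him : imAt (vIdx false) h0 (teamX K T) = T := by
      ext w
      constructor
      · rintro ⟨s, ⟨u, hu, rfl⟩, rfl⟩; exact hu
      · intro hw; exact ⟨fun _ => w, ⟨w, hw, rfl⟩, rfl⟩
    show MTLSat K φ (imAt (vIdx false) h0 (teamX K T))
    rw [him]
    exact hT
  · rintro ⟨B, X, T, hsub, hTS⟩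
    have h0 : vIdx false ∈ X := hsub rfl
    exact ⟨KB B, imAt (vIdx false) h0 T, (main_lemma φ false B X h0 T).mp hTS⟩
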